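/- Let ν be a locally finite (Radon) measure on ℝ and define (w^{(ω)}ν)(x,y) := ∫_{(y,x]} w^{(ω)}(x,z) ν(dz). Then (w^{(ω)}ν)(x,y) = ∫_{(y,x]} w(x,z) ν(dz) + ∫_y^x w(x,z) ω(z) (w^{(ω)}ν)(z,y) dz for all x ≥ y. -/

import Mathlib

open MeasureTheory Set Real

/-- Remark 3.1: for a Radon measure `ν`, the function
`(w^{(ω)}ν)(x,y) := ∫_{(y,x]} w^{(ω)}(x,z) ν(dz)` solves
`(w^{(ω)}ν)(x,y) = ∫_{(y,x]} w(x,z) ν(dz) + ∫_y^x w(x,z) ω(z) (w^{(ω)}ν)(z,y) dz`. -/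
theorem stmt_7 (w : ℝ → ℝ → ℝ) (hwm : Measurable (Function.uncurry w))
    (hwloc : ∀ r : ℝ, ∃ C : ℝ, ∀ x y : ℝ, |x| ≤ r → |y| ≤ r → |w x y| ≤ C)
    (hw0 : ∀ x y : ℝ, x < y → w x y = 0)
    (ω : ℝ → ℝ) (hωm : Measurable ω) (hωpos : ∀ z, 0 ≤ ω z)
    (hωloc : ∀ r : ℝ, ∃ C : ℝ, ∀ z : ℝ, |z| ≤ r → ω z ≤ C)
    (wω : ℝ → ℝ → ℝ) (hwωm : Measurable (Function.uncurry wω))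
    (hwωloc : ∀ r : ℝ, ∃ C : ℝ, ∀ x y : ℝ, |x| ≤ r → |y| ≤ r → |wω x y| ≤ C)
    (hwω0 : ∀ x y : ℝ, x < y → wω x y = 0)
    (hwωeq : ∀ x y : ℝ,
      wω x y = w x y + ∫ z in Set.Ioc y x, w x z * ω z * wω z y)
    (ν : Measure ℝ) [IsLocallyFiniteMeasure ν]
    (F : ℝ → ℝ → ℝ)
    (hF : ∀ x y : ℝ, F x y = ∫ z in Set.Ioc y x, wω x z ∂ν) :
    ∀ x y : ℝ, y ≤ x →
      F x y = (∫ z in Set.Ioc y x, w x z ∂ν)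
        + ∫ z in Set.Ioc y x, w x z * ω z * F z y := by
  intro x y hyx
  -- bounds
  set r : ℝ := max |x| |y| with hr
  have hxr : |x| ≤ r := le_max_left _ _
  have habs : ∀ z : ℝ, z ∈ Set.Icc y x → |z| ≤ r := by
    intro z hz
    rw [abs_le]
    refine ⟨?_, hz.2.trans ((le_abs_self x).trans (le_max_left _ _))⟩
    calc -r ≤ -|y| := neg_le_neg (le_max_right _ _)
      _ ≤ y := neg_abs_le y
      _ ≤ z := hz.1
  obtain ⟨Cw, hCw⟩ := hwloc r
  obtain ⟨Cω, hCω⟩ := hωloc r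
  obtain ⟨Cwω, hCwω⟩ := hwωloc r
  have hCw0 : 0 ≤ Cw := (abs_nonneg _).trans (hCw x x hxr hxr)
  have hCω0 : 0 ≤ Cω := (hωpos x).trans (hCω x hxr)
  have hCwω0 : 0 ≤ Cwω := (abs_nonneg _).trans (hCwω x x hxr hxr)
  set C : ℝ := Cw * Cω * Cwω with hC
  have hC0 : 0 ≤ C := by positivity
  have hfb : ∀ z u : ℝ, z ∈ Set.Icc y x → u ∈ Set.Icc y x →
      |w x u * ω u * wω u z| ≤ C := by
    intro z u hz hu
    rw [abs_mul, abs_mul, hC]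
    refine mul_le_mul (mul_le_mul (hCw x u hxr (habs u hu)) ?_ (abs_nonneg _) hCw0)
      (hCwω u z (habs u hu) (habs z hz)) (abs_nonneg _) (by positivity)
    rw [abs_of_nonneg (hωpos u)]
    exact hCω u (habs u hu)
  -- the restricted measure
  set ν' : Measure ℝ := ν.restrict (Set.Ioc y x) with hν'
  haveI : IsFiniteMeasure ν' := by
    constructor
    rw [hν', Measure.restrict_apply_univ]
    exact lt_of_le_of_lt (measure_mono Set.Ioc_subset_Icc_self)
      isCompact_Icc.measure_lt_top
  -- the two-variable kernel
  set S : Set (ℝ × ℝ) := {p | y < p.1 ∧ p.1 ≤ p.2 ∧ p.2 ≤ x} with hS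
  have hSmeas : MeasurableSet S := by
    have : S = {p : ℝ × ℝ | y < p.1} ∩ ({p : ℝ × ℝ | p.1 ≤ p.2} ∩ {p : ℝ × ℝ | p.2 ≤ x}) := by
      ext p; simp [hS, Set.mem_setOf_eq, and_assoc]
    rw [this]
    exact (measurableSet_lt measurable_const measurable_fst).inter
      ((measurableSet_le measurable_fst measurable_snd).inter
        (measurableSet_le measurable_snd measurable_const))
  set f : ℝ × ℝ → ℝ := fun p => w x p.2 * ω p.2 * wω p.2 p.1 with hf'
  have hfmeas : Measurable f :=
    ((hwm.comp (measurable_const.prodMk measurable_snd)).mul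
      (hωm.comp measurable_snd)).mul
      (hwωm.comp (measurable_snd.prodMk measurable_fst))
  set G : ℝ × ℝ → ℝ := S.indicator f with hG
  have hGmeas : Measurable G := hfmeas.indicator hSmeas
  -- integrability of G on the product
  have hGint : Integrable G (ν'.prod volume) := by
    refine Integrable.mono' (g := (Set.Icc y x ×ˢ Set.Icc y x).indicator fun _ => C)
      ?_ hGmeas.aestronglyMeasurable (Filter.Eventually.of_forall fun p => ?_)
    · rw [integrable_indicator_iff (measurableSet_Icc.prod measurableSet_Icc)]
      refine (integrableOn_const_iff enorm_ne_top).2 (Or.inr ?_)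
      rw [Measure.prod_prod]
      exact ENNReal.mul_lt_top (measure_lt_top ν' _) measure_Icc_lt_top
    · by_cases hp : p ∈ S
      · have hp1 : p.1 ∈ Set.Icc y x := ⟨hp.1.le, hp.2.1.trans hp.2.2⟩
        have hp2 : p.2 ∈ Set.Icc y x := ⟨hp.1.le.trans hp.2.1, hp.2.2⟩
        have hpr : p ∈ Set.Icc y x ×ˢ Set.Icc y x := Set.mem_prod.2 ⟨hp1, hp2⟩
        rw [hG, Set.indicator_of_mem hp, Set.indicator_of_mem hpr]
        exact hfb p.1 p.2 hp1 hp2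
      · rw [hG, Set.indicator_of_notMem hp]
        simpa using Set.indicator_nonneg (fun _ _ => hC0) p
  -- identification of the slices in z
  have hBG : (fun z => ∫ u in Set.Ioc z x, w x u * ω u * wω u z)
      =ᶠ[ae ν'] fun z => ∫ u, G (z, u) := by
    refine (ae_restrict_mem measurableSet_Ioc).mono fun z hz => ?_
    show (∫ u in Set.Ioc z x, w x u * ω u * wω u z) = ∫ u, G (z, u)
    have h1 : (fun u => G (z, u)) =
        (Set.Icc z x).indicator fun u => w x u * ω u * wω u z := by
      funext u
      by_cases hu : u ∈ Set.Icc z x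
      · have hzS : (z, u) ∈ S := ⟨hz.1, hu.1, hu.2⟩
        rw [Set.indicator_of_mem hu, hG, Set.indicator_of_mem hzS]
      · rw [Set.indicator_of_notMem hu, hG, Set.indicator_of_notMem]
        intro h; exact hu ⟨h.2.1, h.2.2⟩
    rw [h1, integral_indicator measurableSet_Icc, integral_Icc_eq_integral_Ioc]
  have hBint : Integrable (fun z => ∫ u in Set.Ioc z x, w x u * ω u * wω u z) ν' :=
    hGint.integral_prod_left.congr hBG.symm
  have hAint : Integrable (fun z => w x z) ν' := by
    refine (integrable_const Cw).mono'
      ((hwm.comp (measurable_const.prodMk measurable_id)).aestronglyMeasurable) ?_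
    refine (ae_restrict_mem measurableSet_Ioc).mono fun z hz => ?_
    rw [Real.norm_eq_abs]
    exact hCw x z hxr (habs z (Set.Ioc_subset_Icc_self hz))
  -- main computation
  rw [hF x y]
  simp only [hwωeq x]
  rw [← hν']
  rw [integral_add hAint hBint]
  congr 1
  calc (∫ z, (∫ u in Set.Ioc z x, w x u * ω u * wω u z) ∂ν')
      = ∫ z, (∫ u, G (z, u)) ∂ν' := integral_congr_ae hBG
    _ = ∫ u, (∫ z, G (z, u) ∂ν') := integral_integral_swap hGint
    _ = ∫ u, (Set.Ioc y x).indicator (fun u => w x u * ω u * F u y) u := by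
        refine integral_congr_ae (Filter.Eventually.of_forall fun u => ?_)
        show (∫ z, G (z, u) ∂ν') = (Set.Ioc y x).indicator (fun u => w x u * ω u * F u y) u
        by_cases hu : u ∈ Set.Ioc y x
        · rw [Set.indicator_of_mem hu]
          have h1 : (fun z => G (z, u)) =
              (Set.Ioc y u).indicator fun z => w x u * ω u * wω u z := by
            funext z
            by_cases hz : z ∈ Set.Ioc y u
            · have hzS : (z, u) ∈ S := ⟨hz.1, hz.2, hu.2⟩
              rw [Set.indicator_of_mem hz, hG, Set.indicator_of_mem hzS]
            · rw [Set.indicator_of_notMem hz, hG, Set.indicator_of_notMem]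
              intro h; exact hz ⟨h.1, h.2.1⟩
          rw [h1, integral_indicator measurableSet_Ioc, hν',
            Measure.restrict_restrict measurableSet_Ioc]
          rw [show Set.Ioc y u ∩ Set.Ioc y x = Set.Ioc y u from
            Set.inter_eq_left.2 (Set.Ioc_subset_Ioc le_rfl hu.2)]
          rw [MeasureTheory.integral_const_mul, ← hF u y]
        · rw [Set.indicator_of_notMem hu]
          have h1 : (fun z => G (z, u)) = fun _ => (0 : ℝ) := by
            funext z
            rw [hG, Set.indicator_of_notMem]
            intro h; exact hu ⟨h.1.trans_le h.2.1, h.2.2⟩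
          rw [h1, integral_zero]
    _ = ∫ u in Set.Ioc y x, w x u * ω u * F u y := integral_indicator measurableSet_Ioc
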